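/- Laplace's method leading order: if f:[a,b]→ℝ is continuous with a unique strict minimum at an interior point c, and f is twice differentiable at c with f''(c)>0, then as ε→0⁺, the integral ∫_a^b e^{-f(x)/ε} dx is asymptotic to e^{-f(c)/ε} · sqrt(2πε/f''(c)), i.e., the ratio tends to 1. -/

import Mathlib

set_option maxHeartbeats 1000000

open Set Real Filter MeasureTheory intervalIntegral

lemma gauss_ratio_tendsto (k δ : ℝ) (hk : 0 < k) (hδ : 0 < δ) :
    Tendsto (fun ε : ℝ => (∫ x in (-δ)..δ, Real.exp (-(k * x ^ 2) / ε)) / Real.sqrt ε)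
      (nhdsWithin 0 (Ioi 0)) (nhds (Real.sqrt (π / k))) := by
  have hsq : Tendsto (fun ε : ℝ => Real.sqrt ε) (nhdsWithin 0 (Ioi 0)) (nhdsWithin 0 (Ioi 0)) := by
    apply tendsto_nhdsWithin_of_tendsto_nhds_of_eventually_within
    · have := (Real.continuous_sqrt.tendsto 0).mono_left (nhdsWithin_le_nhds (s := Ioi (0:ℝ)))
      simpa using this
    · filter_upwards [self_mem_nhdsWithin] with ε (hε : 0 < ε)
      exact Real.sqrt_pos.2 hε
  have htop : Tendsto (fun ε : ℝ => δ / Real.sqrt ε) (nhdsWithin 0 (Ioi 0)) atTop := by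
    simp_rw [div_eq_mul_inv]
    exact (tendsto_inv_nhdsGT_zero.comp hsq).const_mul_atTop hδ
  have hbot : Tendsto (fun ε : ℝ => -(δ / Real.sqrt ε)) (nhdsWithin 0 (Ioi 0)) atBot :=
    tendsto_neg_atBot_iff.2 htop
  have hint : Integrable (fun z : ℝ => Real.exp (-(k * z ^ 2))) := by
    simpa [neg_mul] using integrable_exp_neg_mul_sq hk
  have hmain : Tendsto
      (fun ε : ℝ => ∫ z in (-(δ / Real.sqrt ε))..(δ / Real.sqrt ε), Real.exp (-(k * z ^ 2)))
      (nhdsWithin 0 (Ioi 0)) (nhds (Real.sqrt (π / k))) := by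
    have := intervalIntegral_tendsto_integral hint hbot htop
    have hval : (∫ z : ℝ, Real.exp (-(k * z ^ 2))) = Real.sqrt (π / k) := by
      simpa [neg_mul] using integral_gaussian k
    rwa [hval] at this
  refine hmain.congr' ?_
  filter_upwards [self_mem_nhdsWithin] with ε (hε : 0 < ε)
  have hsε : (0:ℝ) < Real.sqrt ε := Real.sqrt_pos.2 hε
  have hchg := intervalIntegral.integral_comp_mul_left
    (a := -(δ / Real.sqrt ε)) (b := δ / Real.sqrt ε)
    (fun x => Real.exp (-(k * x ^ 2) / ε)) (ne_of_gt hsε)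
  have h1 : ∀ z : ℝ, Real.exp (-(k * (Real.sqrt ε * z) ^ 2) / ε) = Real.exp (-(k * z ^ 2)) := by
    intro z
    congr 1
    rw [mul_pow, Real.sq_sqrt hε.le]
    field_simp
  simp only [h1] at hchg
  rw [hchg]
  rw [mul_neg, mul_div_cancel₀ _ (ne_of_gt hsε)]
  rw [smul_eq_mul, inv_mul_eq_div]

lemma mid_ratio_tendsto (k δ c s2 : ℝ) (hk : 0 < k) (hδ : 0 < δ) (hs2 : 0 < s2) :
    Tendsto (fun ε : ℝ =>
        (∫ x in (c - δ)..(c + δ), Real.exp (-(k * (x - c) ^ 2) / ε)) / (Real.sqrt ε * s2))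
      (nhdsWithin 0 (Ioi 0)) (nhds (Real.sqrt (π / k) / s2)) := by
  have hshift : ∀ ε : ℝ, (∫ x in (c - δ)..(c + δ), Real.exp (-(k * (x - c) ^ 2) / ε))
      = ∫ x in (-δ)..δ, Real.exp (-(k * x ^ 2) / ε) := by
    intro ε
    have := intervalIntegral.integral_comp_sub_right (a := c - δ) (b := c + δ)
      (fun y => Real.exp (-(k * y ^ 2) / ε)) c
    simpa using this
  simp_rw [hshift, ← div_div]
  exact (gauss_ratio_tendsto k δ hk hδ).div_const s2

/-- Double MVT, right side: quadratic bounds from second-derivative bounds. -/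
lemma quad_bound_right (f : ℝ → ℝ) {s : Set ℝ} (c x lo hi : ℝ) (hcx : c < x)
    (hsub : Icc c x ⊆ s)
    (hf : ∀ y ∈ s, HasDerivAt f (deriv f y) y)
    (hf' : ∀ y ∈ s, HasDerivAt (deriv f) (deriv (deriv f) y) y)
    (hc0 : deriv f c = 0)
    (hbd : ∀ y ∈ Icc c x, lo ≤ deriv (deriv f) y ∧ deriv (deriv f) y ≤ hi) :
    lo / 2 * (x - c) ^ 2 ≤ f x - f c ∧ f x - f c ≤ hi / 2 * (x - c) ^ 2 := by
  -- first: bounds on deriv f inside Ioo c x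
  have key : ∀ y ∈ Ioo c x, lo * (y - c) ≤ deriv f y ∧ deriv f y ≤ hi * (y - c) := by
    intro y hy
    have hcy : c < y := hy.1
    have hIccs : Icc c y ⊆ s := fun z hz => hsub ⟨hz.1, hz.2.trans hy.2.le⟩
    have hcont : ContinuousOn (deriv f) (Icc c y) := fun z hz =>
      (hf' z (hIccs hz)).continuousAt.continuousWithinAt
    have hdiff : DifferentiableOn ℝ (deriv f) (Ioo c y) := fun z hz =>
      ((hf' z (hIccs (Ioo_subset_Icc_self hz))).differentiableAt).differentiableWithinAt
    obtain ⟨ζ, hζ, hζeq⟩ := exists_deriv_eq_slope (deriv f) hcy hcont hdiff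
    have hζx : ζ ∈ Icc c x := ⟨hζ.1.le, hζ.2.le.trans hy.2.le⟩
    have hyc : (0:ℝ) < y - c := by linarith
    have : deriv f y = deriv (deriv f) ζ * (y - c) := by
      field_simp [hc0] at hζeq
      linarith [hζeq]
    rw [this]
    obtain ⟨h1, h2⟩ := hbd ζ hζx
    constructor <;> nlinarith
  constructor
  · -- lower bound via u y = f y - lo/2 (y-c)^2
    set u : ℝ → ℝ := fun y => f y - lo / 2 * (y - c) ^ 2 with hu
    have hU : ∀ y ∈ s, HasDerivAt u (deriv f y - lo * (y - c)) y := by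
      intro y hy
      have h2 : HasDerivAt (fun y : ℝ => lo / 2 * (y - c) ^ 2) (lo / 2 * (2 * (y - c))) y := by
        exact (((hasDerivAt_id y).sub_const c).pow 2).const_mul (lo / 2) |>.congr_deriv (by simp only [id_eq]; ring)
      have := (hf y hy).sub h2
      exact this.congr_deriv (by ring)
    have hcont : ContinuousOn u (Icc c x) := fun z hz =>
      (hU z (hsub hz)).continuousAt.continuousWithinAt
    have hdiff : DifferentiableOn ℝ u (Ioo c x) := fun z hz =>
      ((hU z (hsub (Ioo_subset_Icc_self hz))).differentiableAt).differentiableWithinAt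
    obtain ⟨ξ, hξ, hξeq⟩ := exists_deriv_eq_slope u hcx hcont hdiff
    have hduξ : deriv u ξ = deriv f ξ - lo * (ξ - c) := (hU ξ (hsub (Ioo_subset_Icc_self hξ))).deriv
    have hge : 0 ≤ deriv u ξ := by
      rw [hduξ]; linarith [(key ξ hξ).1]
    rw [hξeq] at hge
    have hxc : (0:ℝ) < x - c := by linarith
    have : 0 ≤ u x - u c := by
      have := mul_nonneg hge (le_of_lt hxc)
      rwa [div_mul_cancel₀] at this
      exact ne_of_gt hxc
    simp only [hu] at this
    nlinarith
  · set u : ℝ → ℝ := fun y => f y - hi / 2 * (y - c) ^ 2 with hu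
    have hU : ∀ y ∈ s, HasDerivAt u (deriv f y - hi * (y - c)) y := by
      intro y hy
      have h2 : HasDerivAt (fun y : ℝ => hi / 2 * (y - c) ^ 2) (hi / 2 * (2 * (y - c))) y := by
        exact (((hasDerivAt_id y).sub_const c).pow 2).const_mul (hi / 2) |>.congr_deriv (by simp only [id_eq]; ring)
      have := (hf y hy).sub h2
      exact this.congr_deriv (by ring)
    have hcont : ContinuousOn u (Icc c x) := fun z hz =>
      (hU z (hsub hz)).continuousAt.continuousWithinAt
    have hdiff : DifferentiableOn ℝ u (Ioo c x) := fun z hz =>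
      ((hU z (hsub (Ioo_subset_Icc_self hz))).differentiableAt).differentiableWithinAt
    obtain ⟨ξ, hξ, hξeq⟩ := exists_deriv_eq_slope u hcx hcont hdiff
    have hduξ : deriv u ξ = deriv f ξ - hi * (ξ - c) := (hU ξ (hsub (Ioo_subset_Icc_self hξ))).deriv
    have hle : deriv u ξ ≤ 0 := by
      rw [hduξ]; linarith [(key ξ hξ).2]
    rw [hξeq] at hle
    have hxc : (0:ℝ) < x - c := by linarith
    have : u x - u c ≤ 0 := by
      have := mul_nonpos_of_nonpos_of_nonneg hle (le_of_lt hxc)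
      rwa [div_mul_cancel₀] at this
      exact ne_of_gt hxc
    simp only [hu] at this
    nlinarith

lemma quad_bound_left (f : ℝ → ℝ) {s : Set ℝ} (c x lo hi : ℝ) (hxc : x < c)
    (hsub : Icc x c ⊆ s)
    (hf : ∀ y ∈ s, HasDerivAt f (deriv f y) y)
    (hf' : ∀ y ∈ s, HasDerivAt (deriv f) (deriv (deriv f) y) y)
    (hc0 : deriv f c = 0)
    (hbd : ∀ y ∈ Icc x c, lo ≤ deriv (deriv f) y ∧ deriv (deriv f) y ≤ hi) :
    lo / 2 * (x - c) ^ 2 ≤ f x - f c ∧ f x - f c ≤ hi / 2 * (x - c) ^ 2 := by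
  have key : ∀ y ∈ Ioo x c, hi * (y - c) ≤ deriv f y ∧ deriv f y ≤ lo * (y - c) := by
    intro y hy
    have hyc : y < c := hy.2
    have hIccs : Icc y c ⊆ s := fun z hz => hsub ⟨hy.1.le.trans hz.1, hz.2⟩
    have hcont : ContinuousOn (deriv f) (Icc y c) := fun z hz =>
      (hf' z (hIccs hz)).continuousAt.continuousWithinAt
    have hdiff : DifferentiableOn ℝ (deriv f) (Ioo y c) := fun z hz =>
      ((hf' z (hIccs (Ioo_subset_Icc_self hz))).differentiableAt).differentiableWithinAt
    obtain ⟨ζ, hζ, hζeq⟩ := exists_deriv_eq_slope (deriv f) hyc hcont hdiff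
    have hζx : ζ ∈ Icc x c := ⟨hy.1.le.trans hζ.1.le, hζ.2.le⟩
    have hcy : (0:ℝ) < c - y := by linarith
    have : deriv f y = deriv (deriv f) ζ * (y - c) := by
      field_simp [hc0] at hζeq
      nlinarith [hζeq]
    rw [this]
    obtain ⟨h1, h2⟩ := hbd ζ hζx
    constructor <;> nlinarith
  constructor
  · set u : ℝ → ℝ := fun y => f y - lo / 2 * (y - c) ^ 2 with hu
    have hU : ∀ y ∈ s, HasDerivAt u (deriv f y - lo * (y - c)) y := by
      intro y hy
      have h2 : HasDerivAt (fun y : ℝ => lo / 2 * (y - c) ^ 2) (lo / 2 * (2 * (y - c))) y :=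
        (((hasDerivAt_id y).sub_const c).pow 2).const_mul (lo / 2)
          |>.congr_deriv (by simp only [id_eq]; ring)
      exact ((hf y hy).sub h2).congr_deriv (by ring)
    have hcont : ContinuousOn u (Icc x c) := fun z hz =>
      (hU z (hsub hz)).continuousAt.continuousWithinAt
    have hdiff : DifferentiableOn ℝ u (Ioo x c) := fun z hz =>
      ((hU z (hsub (Ioo_subset_Icc_self hz))).differentiableAt).differentiableWithinAt
    obtain ⟨ξ, hξ, hξeq⟩ := exists_deriv_eq_slope u hxc hcont hdiff
    have hduξ : deriv u ξ = deriv f ξ - lo * (ξ - c) := (hU ξ (hsub (Ioo_subset_Icc_self hξ))).deriv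
    have hle : deriv u ξ ≤ 0 := by
      rw [hduξ]; linarith [(key ξ hξ).2]
    rw [hξeq] at hle
    have hcx : (0:ℝ) < c - x := by linarith
    have : u c - u x ≤ 0 := by
      have := mul_nonpos_of_nonpos_of_nonneg hle (le_of_lt hcx)
      rwa [div_mul_cancel₀] at this
      exact ne_of_gt hcx
    simp only [hu] at this
    nlinarith
  · set u : ℝ → ℝ := fun y => f y - hi / 2 * (y - c) ^ 2 with hu
    have hU : ∀ y ∈ s, HasDerivAt u (deriv f y - hi * (y - c)) y := by
      intro y hy
      have h2 : HasDerivAt (fun y : ℝ => hi / 2 * (y - c) ^ 2) (hi / 2 * (2 * (y - c))) y :=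
        (((hasDerivAt_id y).sub_const c).pow 2).const_mul (hi / 2)
          |>.congr_deriv (by simp only [id_eq]; ring)
      exact ((hf y hy).sub h2).congr_deriv (by ring)
    have hcont : ContinuousOn u (Icc x c) := fun z hz =>
      (hU z (hsub hz)).continuousAt.continuousWithinAt
    have hdiff : DifferentiableOn ℝ u (Ioo x c) := fun z hz =>
      ((hU z (hsub (Ioo_subset_Icc_self hz))).differentiableAt).differentiableWithinAt
    obtain ⟨ξ, hξ, hξeq⟩ := exists_deriv_eq_slope u hxc hcont hdiff
    have hduξ : deriv u ξ = deriv f ξ - hi * (ξ - c) := (hU ξ (hsub (Ioo_subset_Icc_self hξ))).deriv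
    have hge : 0 ≤ deriv u ξ := by
      rw [hduξ]; linarith [(key ξ hξ).1]
    rw [hξeq] at hge
    have hcx : (0:ℝ) < c - x := by linarith
    have : 0 ≤ u c - u x := by
      have := mul_nonneg hge (le_of_lt hcx)
      rwa [div_mul_cancel₀] at this
      exact ne_of_gt hcx
    simp only [hu] at this
    nlinarith

/-- Laplace's method, leading order: if f has a unique strict interior minimum
at c, is C² near c with f''(c) > 0, then
∫_a^b e^{-f/ε} ~ e^{-f(c)/ε} √(2πε/f''(c)) as ε → 0⁺. -/
theorem laplace_method (a b c : ℝ) (f : ℝ → ℝ)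
    (hab : a < b) (hc : c ∈ Ioo a b)
    (hcont : ContinuousOn f (Icc a b))
    (hmin : ∀ x ∈ Icc a b, x ≠ c → f c < f x)
    (hsmooth : ∃ δ > 0, ContDiffOn ℝ 2 f (Metric.ball c δ))
    (hf'' : 0 < deriv (deriv f) c) :
    Tendsto
      (fun ε : ℝ =>
        (∫ x in a..b, Real.exp (-f x / ε)) /
          (Real.exp (-f c / ε) * Real.sqrt (2 * π * ε / deriv (deriv f) c)))
      (nhdsWithin 0 (Ioi 0)) (nhds 1) := by
  obtain ⟨δ₀, hδ₀, hsm⟩ := hsmooth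
  set A := deriv (deriv f) c with hA
  have hball : IsOpen (Metric.ball c δ₀) := Metric.isOpen_ball
  -- pointwise derivatives on the ball
  have hd1 : ∀ y ∈ Metric.ball c δ₀, HasDerivAt f (deriv f y) y := fun y hy =>
    ((hsm.differentiableOn (by norm_num)).differentiableAt (hball.mem_nhds hy)).hasDerivAt
  have hsm' : ContDiffOn ℝ 1 (deriv f) (Metric.ball c δ₀) :=
    hsm.deriv_of_isOpen hball (by norm_num)
  have hd2 : ∀ y ∈ Metric.ball c δ₀, HasDerivAt (deriv f) (deriv (deriv f) y) y := fun y hy =>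
    ((hsm'.differentiableOn (by norm_num)).differentiableAt (hball.mem_nhds hy)).hasDerivAt
  have hf2cont : ContinuousAt (deriv (deriv f)) c :=
    (hsm'.continuousOn_deriv_of_isOpen hball (by norm_num)).continuousAt
      (hball.mem_nhds (Metric.mem_ball_self hδ₀))
  -- first derivative vanishes at c
  have hfc0 : deriv f c = 0 := by
    apply IsLocalMin.deriv_eq_zero
    filter_upwards [isOpen_Ioo.mem_nhds hc] with x hx
    by_cases hxc : x = c
    · simp [hxc]
    · exact (hmin x ⟨hx.1.le, hx.2.le⟩ hxc).le
  rw [Metric.tendsto_nhds]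
  intro θ hθ
  -- choose η
  have hcont2 : Tendsto (fun η : ℝ => Real.sqrt (A / (A - η))) (nhds 0) (nhds 1) := by
    have h1 : ContinuousAt (fun η : ℝ => Real.sqrt (A / (A - η))) 0 := by
      apply Real.continuous_sqrt.continuousAt.comp
      exact ContinuousAt.div continuousAt_const (by fun_prop) (by simpa using ne_of_gt hf'')
    have := h1.tendsto
    simpa [div_self (ne_of_gt hf'')] using this
  have hcont3 : Tendsto (fun η : ℝ => Real.sqrt (A / (A + η))) (nhds 0) (nhds 1) := by
    have h1 : ContinuousAt (fun η : ℝ => Real.sqrt (A / (A + η))) 0 := by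
      apply Real.continuous_sqrt.continuousAt.comp
      exact ContinuousAt.div continuousAt_const (by fun_prop) (by simpa using ne_of_gt hf'')
    have := h1.tendsto
    simpa [div_self (ne_of_gt hf'')] using this
  have hev : ∀ᶠ η in nhdsWithin (0:ℝ) (Ioi 0),
      (0 < η ∧ η < A) ∧ Real.sqrt (A / (A - η)) < 1 + θ ∧ 1 - θ < Real.sqrt (A / (A + η)) := by
    have e1 : ∀ᶠ η in nhdsWithin (0:ℝ) (Ioi 0), 0 < η := self_mem_nhdsWithin
    have e2 : ∀ᶠ η in nhdsWithin (0:ℝ) (Ioi 0), η < A :=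
      eventually_nhdsWithin_of_eventually_nhds (eventually_lt_nhds hf'')
    have e3 : ∀ᶠ η in nhdsWithin (0:ℝ) (Ioi 0), Real.sqrt (A / (A - η)) < 1 + θ :=
      (hcont2.mono_left nhdsWithin_le_nhds).eventually (eventually_lt_nhds (by linarith))
    have e4 : ∀ᶠ η in nhdsWithin (0:ℝ) (Ioi 0), 1 - θ < Real.sqrt (A / (A + η)) :=
      (hcont3.mono_left nhdsWithin_le_nhds).eventually (eventually_gt_nhds (by linarith))
    filter_upwards [e1, e2, e3, e4] with η h1 h2 h3 h4
    exact ⟨⟨h1, h2⟩, h3, h4⟩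
  obtain ⟨η, ⟨hη0, hηA⟩, hr2, hr1⟩ := hev.exists
  -- choose δ
  obtain ⟨δ₁, hδ₁, hδ₁prop⟩ := Metric.continuousAt_iff.1 hf2cont η hη0
  have hca : 0 < c - a := by linarith [hc.1]
  have hbc : 0 < b - c := by linarith [hc.2]
  set δ := min (δ₁ / 2) (min (δ₀ / 2) (min ((c - a) / 2) ((b - c) / 2))) with hδdef
  have hδpos : 0 < δ := by
    apply lt_min (by linarith)
    exact lt_min (by linarith) (lt_min (by linarith) (by linarith))
  have hδδ₁ : δ ≤ δ₁ / 2 := min_le_left _ _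
  have hδδ₀ : δ ≤ δ₀ / 2 := (min_le_right _ _).trans (min_le_left _ _)
  have hδa : δ ≤ (c - a) / 2 := (min_le_right _ _).trans ((min_le_right _ _).trans (min_le_left _ _))
  have hδb : δ ≤ (b - c) / 2 := (min_le_right _ _).trans ((min_le_right _ _).trans (min_le_right _ _))
  have ha' : a < c - δ := by linarith
  have hb' : c + δ < b := by linarith
  have hIccball : Icc (c - δ) (c + δ) ⊆ Metric.ball c δ₀ := by
    intro y hy
    rw [Metric.mem_ball, Real.dist_eq, abs_lt]
    constructor <;> [linarith [hy.1]; linarith [hy.2]]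
  have hbd : ∀ y ∈ Icc (c - δ) (c + δ), A - η ≤ deriv (deriv f) y ∧ deriv (deriv f) y ≤ A + η := by
    intro y hy
    have : dist y c < δ₁ := by
      rw [Real.dist_eq, abs_lt]
      constructor <;> [linarith [hy.1]; linarith [hy.2]]
    have := hδ₁prop this
    rw [Real.dist_eq, abs_lt] at this
    constructor <;> [linarith [this.1]; linarith [this.2]]
  -- quadratic bounds
  have hquad : ∀ x ∈ Icc (c - δ) (c + δ),
      (A - η) / 2 * (x - c) ^ 2 ≤ f x - f c ∧ f x - f c ≤ (A + η) / 2 * (x - c) ^ 2 := by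
    intro x hx
    rcases lt_trichotomy x c with hlt | heq | hgt
    · exact quad_bound_left f c x (A - η) (A + η) hlt
        (fun z hz => hIccball ⟨hx.1.trans hz.1, hz.2.trans (by linarith)⟩) hd1 hd2 hfc0
        (fun y hy => hbd y ⟨hx.1.trans hy.1, hy.2.trans (by linarith)⟩)
    · subst heq; simp
    · exact quad_bound_right f c x (A - η) (A + η) hgt
        (fun z hz => hIccball ⟨(by linarith : c - δ ≤ c).trans hz.1 |>.trans' (by linarith), hz.2.trans hx.2⟩) hd1 hd2 hfc0
        (fun y hy => hbd y ⟨(by linarith : c - δ ≤ c).trans hy.1 |>.trans' (by linarith), hy.2.trans hx.2⟩)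
  -- tail bound
  set K := Icc a b ∩ (Ioo (c - δ) (c + δ))ᶜ with hK
  have hKc : IsCompact K := isCompact_Icc.inter_right isOpen_Ioo.isClosed_compl
  have hKne : K.Nonempty := ⟨a, ⟨le_refl a, hab.le⟩, fun h => absurd h.1 (by linarith)⟩
  obtain ⟨x₀, hx₀K, hx₀min⟩ := hKc.exists_isMinOn hKne (hcont.mono inter_subset_left)
  set m := f x₀ - f c with hm
  have hm0 : 0 < m := by
    apply sub_pos.2
    apply hmin x₀ hx₀K.1
    intro h
    exact hx₀K.2 (h ▸ ⟨by linarith, by linarith⟩)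
  have htail : ∀ x ∈ Icc a b, x ∉ Ioo (c - δ) (c + δ) → f c + m ≤ f x := by
    intro x hx hx2
    have := isMinOn_iff.1 hx₀min x ⟨hx, hx2⟩
    linarith
  -- the constant s2
  set s2 := Real.sqrt (2 * π * A⁻¹) with hs2def
  have hApos : (0:ℝ) < A := hf''
  have hs2 : 0 < s2 := Real.sqrt_pos.2 (by positivity)
  set k₁ := (A + η) / 2 with hk₁def
  set k₂ := (A - η) / 2 with hk₂def
  have hk₁ : 0 < k₁ := by positivity
  have hk₂ : 0 < k₂ := by rw [hk₂def]; linarith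
  -- identification of limits
  have hr1eq : Real.sqrt (π / k₁) / s2 = Real.sqrt (A / (A + η)) := by
    rw [hs2def, ← Real.sqrt_div (by positivity)]
    congr 1
    rw [hk₁def]
    have h1 : A + η ≠ 0 := by positivity
    field_simp [Real.pi_ne_zero, ne_of_gt hApos, h1]
  have hr2eq : Real.sqrt (π / k₂) / s2 = Real.sqrt (A / (A - η)) := by
    rw [hs2def, ← Real.sqrt_div (by positivity)]
    congr 1
    rw [hk₂def]
    have h1 : A - η ≠ 0 := ne_of_gt (by linarith)
    field_simp [Real.pi_ne_zero, ne_of_gt hApos, h1]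
  -- Tendsto of lower bound
  have hL : Tendsto (fun ε : ℝ =>
      (∫ x in (c - δ)..(c + δ), Real.exp (-(k₁ * (x - c) ^ 2) / ε)) / (Real.sqrt ε * s2))
      (nhdsWithin 0 (Ioi 0)) (nhds (Real.sqrt (A / (A + η)))) := by
    have := mid_ratio_tendsto k₁ δ c s2 hk₁ hδpos hs2
    rwa [hr1eq] at this
  -- tail term tendsto 0
  have hT : Tendsto (fun ε : ℝ => (b - a) * Real.exp (-m / ε) / (Real.sqrt ε * s2))
      (nhdsWithin 0 (Ioi 0)) (nhds 0) := by
    apply squeeze_zero' (g := fun ε : ℝ => (b - a) / (m * s2) * Real.sqrt ε)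
    · filter_upwards [self_mem_nhdsWithin] with ε (hε : (0:ℝ) < ε)
      exact div_nonneg (mul_nonneg (by linarith) (Real.exp_pos _).le) (by positivity)
    · filter_upwards [self_mem_nhdsWithin] with ε (hε : (0:ℝ) < ε)
      have hsε : (0:ℝ) < Real.sqrt ε := Real.sqrt_pos.2 hε
      have hexp : Real.exp (-m / ε) ≤ ε / m := by
        rw [show -m / ε = -(m / ε) by ring, Real.exp_neg]
        have h1 : m / ε ≤ Real.exp (m / ε) := by linarith [Real.add_one_le_exp (m / ε)]
        calc (Real.exp (m / ε))⁻¹ ≤ (m / ε)⁻¹ := by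
              apply inv_anti₀ (by positivity) h1
          _ = ε / m := by rw [inv_div]
      calc (b - a) * Real.exp (-m / ε) / (Real.sqrt ε * s2)
          ≤ (b - a) * (ε / m) / (Real.sqrt ε * s2) := by
            apply (div_le_div_iff_of_pos_right (by positivity)).2
            exact mul_le_mul_of_nonneg_left hexp (by linarith)
        _ = (b - a) / (m * s2) * (ε / Real.sqrt ε) := by
            have hm' : m ≠ 0 := ne_of_gt hm0
            have hs2' : s2 ≠ 0 := ne_of_gt hs2
            have hsε' : Real.sqrt ε ≠ 0 := ne_of_gt hsε
            field_simp
        _ = (b - a) / (m * s2) * Real.sqrt ε := by rw [Real.div_sqrt]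
    · have : Tendsto (fun ε : ℝ => (b - a) / (m * s2) * Real.sqrt ε) (nhds 0) (nhds 0) := by
        have := (Real.continuous_sqrt.tendsto 0).const_mul ((b - a) / (m * s2))
        simpa using this
      exact this.mono_left nhdsWithin_le_nhds
  have hU : Tendsto (fun ε : ℝ =>
      (∫ x in (c - δ)..(c + δ), Real.exp (-(k₂ * (x - c) ^ 2) / ε)) / (Real.sqrt ε * s2)
        + (b - a) * Real.exp (-m / ε) / (Real.sqrt ε * s2))
      (nhdsWithin 0 (Ioi 0)) (nhds (Real.sqrt (A / (A - η)))) := by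
    have h1 := mid_ratio_tendsto k₂ δ c s2 hk₂ hδpos hs2
    rw [hr2eq] at h1
    simpa using h1.add hT
  -- eventual inequalities on L and U
  have hevL := hL.eventually (eventually_gt_nhds hr1)
  have hevU := hU.eventually (eventually_lt_nhds hr2)
  filter_upwards [hevL, hevU, self_mem_nhdsWithin] with ε hLε hUε (hε : (0:ℝ) < ε)
  -- now the pointwise bounds
  have hsε : (0:ℝ) < Real.sqrt ε := Real.sqrt_pos.2 hε
  have hE : (0:ℝ) < Real.exp (-f c / ε) := Real.exp_pos _
  have hcontF : ContinuousOn (fun x => Real.exp (-f x / ε)) (Icc a b) :=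
    Real.continuous_exp.comp_continuousOn ((hcont.neg).div_const ε)
  have hIg : ∀ u v : ℝ, u ∈ Icc a b → v ∈ Icc a b →
      IntervalIntegrable (fun x => Real.exp (-f x / ε)) volume u v := by
    intro u v hu hv
    exact (hcontF.mono (uIcc_subset_Icc hu hv)).intervalIntegrable
  have hmem1 : c - δ ∈ Icc a b := ⟨by linarith, by linarith⟩
  have hmem2 : c + δ ∈ Icc a b := ⟨by linarith, by linarith⟩
  have hmema : a ∈ Icc a b := ⟨le_refl a, hab.le⟩
  have hmemb : b ∈ Icc a b := ⟨hab.le, le_refl b⟩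
  have hsplit : (∫ x in a..b, Real.exp (-f x / ε))
      = (∫ x in a..(c - δ), Real.exp (-f x / ε))
        + ((∫ x in (c - δ)..(c + δ), Real.exp (-f x / ε))
          + (∫ x in (c + δ)..b, Real.exp (-f x / ε))) := by
    rw [integral_add_adjacent_intervals (hIg _ _ hmem1 hmem2) (hIg _ _ hmem2 hmemb),
      integral_add_adjacent_intervals (hIg _ _ hmema hmem1) (hIg _ _ hmem1 hmemb)]
  -- middle lower bound
  have hmid_lb : Real.exp (-f c / ε) * (∫ x in (c - δ)..(c + δ), Real.exp (-(k₁ * (x - c) ^ 2) / ε))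
      ≤ ∫ x in (c - δ)..(c + δ), Real.exp (-f x / ε) := by
    rw [← intervalIntegral.integral_const_mul]
    apply intervalIntegral.integral_mono_on (by linarith)
      (Continuous.intervalIntegrable (by fun_prop) _ _)
      (hIg _ _ hmem1 hmem2)
    intro x hx
    rw [← Real.exp_add, ← add_div]
    apply Real.exp_le_exp.2
    apply (div_le_div_iff_of_pos_right hε).2
    linarith [(hquad x hx).2]
  -- middle upper bound
  have hmid_ub : (∫ x in (c - δ)..(c + δ), Real.exp (-f x / ε))
      ≤ Real.exp (-f c / ε) * (∫ x in (c - δ)..(c + δ), Real.exp (-(k₂ * (x - c) ^ 2) / ε)) := by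
    rw [← intervalIntegral.integral_const_mul]
    apply intervalIntegral.integral_mono_on (by linarith)
      (hIg _ _ hmem1 hmem2)
      (Continuous.intervalIntegrable (by fun_prop) _ _)
    intro x hx
    rw [← Real.exp_add, ← add_div]
    apply Real.exp_le_exp.2
    apply (div_le_div_iff_of_pos_right hε).2
    linarith [(hquad x hx).1]
  -- tail upper bounds
  have htail1 : (∫ x in a..(c - δ), Real.exp (-f x / ε))
      ≤ (c - δ - a) * Real.exp (-(f c + m) / ε) := by
    have h1 : (∫ x in a..(c - δ), Real.exp (-f x / ε))
        ≤ ∫ _x in a..(c - δ), Real.exp (-(f c + m) / ε) := by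
      apply intervalIntegral.integral_mono_on (by linarith)
        (hIg _ _ hmema hmem1) intervalIntegrable_const
      intro x hx
      apply Real.exp_le_exp.2
      apply (div_le_div_iff_of_pos_right hε).2
      have hfx : f c + m ≤ f x := htail x ⟨hx.1, hx.2.trans (by linarith)⟩
        (fun h => absurd h.1 (by linarith [hx.2]))
      linarith
    rwa [intervalIntegral.integral_const, smul_eq_mul] at h1
  have htail2 : (∫ x in (c + δ)..b, Real.exp (-f x / ε))
      ≤ (b - (c + δ)) * Real.exp (-(f c + m) / ε) := by
    have h1 : (∫ x in (c + δ)..b, Real.exp (-f x / ε))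
        ≤ ∫ _x in (c + δ)..b, Real.exp (-(f c + m) / ε) := by
      apply intervalIntegral.integral_mono_on (by linarith)
        (hIg _ _ hmem2 hmemb) intervalIntegrable_const
      intro x hx
      apply Real.exp_le_exp.2
      apply (div_le_div_iff_of_pos_right hε).2
      have hfx : f c + m ≤ f x := htail x ⟨(by linarith : a ≤ c + δ).trans hx.1, hx.2⟩
        (fun h => absurd h.2 (by linarith [hx.1]))
      linarith
    rwa [intervalIntegral.integral_const, smul_eq_mul] at h1
  -- total bounds on the integral
  have ht1nn : 0 ≤ ∫ x in a..(c - δ), Real.exp (-f x / ε) :=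
    intervalIntegral.integral_nonneg (by linarith) (fun x _ => (Real.exp_pos _).le)
  have ht2nn : 0 ≤ ∫ x in (c + δ)..b, Real.exp (-f x / ε) :=
    intervalIntegral.integral_nonneg (by linarith) (fun x _ => (Real.exp_pos _).le)
  have hN_lb : Real.exp (-f c / ε)
        * (∫ x in (c - δ)..(c + δ), Real.exp (-(k₁ * (x - c) ^ 2) / ε))
      ≤ ∫ x in a..b, Real.exp (-f x / ε) := by
    rw [hsplit]; linarith
  have hN_ub : (∫ x in a..b, Real.exp (-f x / ε))
      ≤ Real.exp (-f c / ε) * (∫ x in (c - δ)..(c + δ), Real.exp (-(k₂ * (x - c) ^ 2) / ε))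
        + (b - a) * Real.exp (-(f c + m) / ε) := by
    rw [hsplit]
    nlinarith [Real.exp_pos (-(f c + m) / ε), hδpos, hmid_ub, htail1, htail2]
  -- rewrite the denominator
  have hDrw : Real.sqrt (2 * π * ε / A) = Real.sqrt ε * s2 := by
    rw [hs2def, ← Real.sqrt_mul hε.le]
    congr 1
    field_simp
  rw [Real.dist_eq, abs_lt]
  have hDpos : 0 < Real.exp (-f c / ε) * (Real.sqrt ε * s2) := by positivity
  constructor
  · -- lower bound
    have hR_lb : (∫ x in (c - δ)..(c + δ), Real.exp (-(k₁ * (x - c) ^ 2) / ε))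
          / (Real.sqrt ε * s2)
        ≤ (∫ x in a..b, Real.exp (-f x / ε))
          / (Real.exp (-f c / ε) * Real.sqrt (2 * π * ε / A)) := by
      rw [hDrw]
      calc (∫ x in (c - δ)..(c + δ), Real.exp (-(k₁ * (x - c) ^ 2) / ε)) / (Real.sqrt ε * s2)
          = Real.exp (-f c / ε)
              * (∫ x in (c - δ)..(c + δ), Real.exp (-(k₁ * (x - c) ^ 2) / ε))
              / (Real.exp (-f c / ε) * (Real.sqrt ε * s2)) :=
            (mul_div_mul_left _ _ (ne_of_gt hE)).symm
        _ ≤ (∫ x in a..b, Real.exp (-f x / ε))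
              / (Real.exp (-f c / ε) * (Real.sqrt ε * s2)) :=
            (div_le_div_iff_of_pos_right hDpos).2 hN_lb
    linarith [hLε.trans_le hR_lb]
  · -- upper bound
    have hR_ub : (∫ x in a..b, Real.exp (-f x / ε))
          / (Real.exp (-f c / ε) * Real.sqrt (2 * π * ε / A))
        ≤ (∫ x in (c - δ)..(c + δ), Real.exp (-(k₂ * (x - c) ^ 2) / ε)) / (Real.sqrt ε * s2)
          + (b - a) * Real.exp (-m / ε) / (Real.sqrt ε * s2) := by
      rw [hDrw]
      have h1 := (div_le_div_iff_of_pos_right hDpos).2 hN_ub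
      have h2 : (Real.exp (-f c / ε)
            * (∫ x in (c - δ)..(c + δ), Real.exp (-(k₂ * (x - c) ^ 2) / ε))
            + (b - a) * Real.exp (-(f c + m) / ε))
            / (Real.exp (-f c / ε) * (Real.sqrt ε * s2))
          = (∫ x in (c - δ)..(c + δ), Real.exp (-(k₂ * (x - c) ^ 2) / ε)) / (Real.sqrt ε * s2)
            + (b - a) * Real.exp (-m / ε) / (Real.sqrt ε * s2) := by
        rw [add_div, mul_div_mul_left _ _ (ne_of_gt hE)]
        congr 1
        rw [show Real.exp (-(f c + m) / ε) = Real.exp (-f c / ε) * Real.exp (-m / ε) by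
          rw [← Real.exp_add]; congr 1; ring]
        rw [show (b - a) * (Real.exp (-f c / ε) * Real.exp (-m / ε))
            = Real.exp (-f c / ε) * ((b - a) * Real.exp (-m / ε)) by ring]
        rw [mul_div_mul_left _ _ (ne_of_gt hE)]
      rw [h2] at h1
      exact h1
    linarith [hR_ub.trans_lt hUε]
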